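/- Let w ≥ 3, assume a_{w-1} = 1, and let 1 ≤ s ≤ w−2 and 0 ≤ t ≤ w−2. Then every column of B^s·C·B^t other than the (t+2)-nd column (1-indexed) is zero, and the (t+2)-nd column has its entries in rows 1 through w−s equal to 0 and its entry in row w−s+1 equal to 1. -/

import Mathlib

open Matrix

/-- The matrix `B` of MT-type recursions: first row zero, row `i` (0-indexed,
`1 ≤ i ≤ w-2`) is the standard basis row vector with a `1` in column `i+1`,
and the last row is `(a_{w-1}, …, a_0)` (stored as `a 0, …, a (w-1)`). -/
def mtB (w : ℕ) (a : Fin w → ZMod 2) : Matrix (Fin w) (Fin w) (ZMod 2) :=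
  Matrix.of fun i j =>
    if (i : ℕ) = w - 1 then a j
    else if 1 ≤ (i : ℕ) ∧ (j : ℕ) = (i : ℕ) + 1 then 1 else 0

/-- The matrix `C`: its only nonzero entry is a `1` in position `(1,2)` (1-indexed). -/
def mtC (w : ℕ) : Matrix (Fin w) (Fin w) (ZMod 2) :=
  Matrix.of fun i j => if (i : ℕ) = 0 ∧ (j : ℕ) = 1 then 1 else 0

/-- `Q_k = Σ_{i=0}^{k-1} B^i · C · B^{k-1-i}`. -/
def mtQ (w : ℕ) (a : Fin w → ZMod 2) (k : ℕ) : Matrix (Fin w) (Fin w) (ZMod 2) :=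
  ∑ i ∈ Finset.range k, (mtB w a) ^ i * mtC w * (mtB w a) ^ (k - 1 - i)

lemma mtB_pow_row1 (w : ℕ) (hw : 2 < w) (a : Fin w → ZMod 2) :
    ∀ t, t ≤ w - 2 → ∀ j : Fin w,
      ((mtB w a) ^ t) ⟨1, by omega⟩ j = if (j : ℕ) = t + 1 then 1 else 0 := by
  intro t
  induction t with
  | zero =>
    intro _ j
    simp [Matrix.one_apply, Fin.ext_iff, eq_comm]
  | succ t ih =>
    intro ht j
    have ht' : t ≤ w - 2 := by omega
    rw [pow_succ, Matrix.mul_apply]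
    rw [Finset.sum_eq_single (⟨t + 1, by omega⟩ : Fin w)]
    · rw [ih ht']
      simp only [mtB, Matrix.of_apply]
      have h1 : (t : ℕ) + 1 ≠ w - 1 := by omega
      simp [h1]
    · intro b _ hb
      rw [ih ht']
      have : (b : ℕ) ≠ t + 1 := by
        intro h; apply hb; exact Fin.ext h
      simp [this]
    · intro h; exact absurd (Finset.mem_univ _) h

lemma mtB_pow_col0 (w : ℕ) (hw : 2 < w) (a : Fin w → ZMod 2) (ha : a ⟨0, by omega⟩ = 1) :
    ∀ s (hs1 : 1 ≤ s) (hs2 : s ≤ w - 1),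
      (∀ i : Fin w, (i : ℕ) < w - s → ((mtB w a) ^ s) i ⟨0, by omega⟩ = 0)
      ∧ ((mtB w a) ^ s) ⟨w - s, by omega⟩ ⟨0, by omega⟩ = 1 := by
  intro s
  induction s with
  | zero => intro h; omega
  | succ s ih =>
    intro _ hs1
    rcases Nat.eq_zero_or_pos s with hs0 | hsp
    · subst hs0
      constructor
      · intro i hi
        rw [pow_one]
        simp only [mtB, Matrix.of_apply]
        have h1 : (i : ℕ) ≠ w - 1 := by omega
        simp [h1]
      · rw [pow_one]
        simp only [mtB, Matrix.of_apply]
        have h1 : w - 1 = w - 1 := rfl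
        simp [h1, ha]
    · have hs' : s ≤ w - 1 := by omega
      obtain ⟨ih0, ih1⟩ := ih hsp hs'
      have key : ∀ (i : Fin w) (hi1 : 1 ≤ (i : ℕ)) (hi2 : (i : ℕ) ≤ w - 2),
          ((mtB w a) ^ (s + 1)) i ⟨0, by omega⟩
            = ((mtB w a) ^ s) ⟨(i : ℕ) + 1, by omega⟩ ⟨0, by omega⟩ := by
        intro i hi1 hi2
        rw [pow_succ', Matrix.mul_apply]
        rw [Finset.sum_eq_single (⟨(i : ℕ) + 1, by omega⟩ : Fin w)]
        · simp only [mtB, Matrix.of_apply]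
          have h1 : (i : ℕ) ≠ w - 1 := by omega
          simp [h1, hi1]
        · intro b _ hb
          have hbne : (b : ℕ) ≠ (i : ℕ) + 1 := by
            intro h; apply hb; exact Fin.ext h
          simp only [mtB, Matrix.of_apply]
          have h1 : (i : ℕ) ≠ w - 1 := by omega
          simp [h1, hbne]
        · intro h; exact absurd (Finset.mem_univ _) h
      constructor
      · intro i hi
        rcases Nat.eq_zero_or_pos (i : ℕ) with hi0 | hip
        · rw [pow_succ', Matrix.mul_apply]
          apply Finset.sum_eq_zero
          intro b _
          simp only [mtB, Matrix.of_apply]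
          have h1 : (0 : ℕ) ≠ w - 1 := by omega
          simp [hi0, h1]
        · rw [key i hip (by omega)]
          exact ih0 _ (by simp; omega)
      · have h1 : (1:ℕ) ≤ w - (s+1) := by omega
        have h2 : w - (s+1) ≤ w - 2 := by omega
        have := key ⟨w - (s+1), by omega⟩ h1 h2
        simp only at this
        rw [this]
        have : w - (s + 1) + 1 = w - s := by omega
        simp_rw [this]
        exact ih1


/-- the shape of `B^s · C · B^t`: all columns but the `(t+2)`-nd
(1-indexed) vanish, and that column has `w-s` zeroes at the top followed by a `1`. -/
theorem stmt5 (w : ℕ) (hw : 3 ≤ w) (a : Fin w → ZMod 2) (ha : a ⟨0, by omega⟩ = 1)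
    (s t : ℕ) (hs1 : 1 ≤ s) (hs : s ≤ w - 2) (ht : t ≤ w - 2) :
    (∀ i j : Fin w, (j : ℕ) ≠ t + 1 →
      ((mtB w a) ^ s * mtC w * (mtB w a) ^ t) i j = 0) ∧
    (∀ i : Fin w, (i : ℕ) < w - s →
      ((mtB w a) ^ s * mtC w * (mtB w a) ^ t) i ⟨t + 1, by omega⟩ = 0) ∧
    ((mtB w a) ^ s * mtC w * (mtB w a) ^ t) ⟨w - s, by omega⟩ ⟨t + 1, by omega⟩ = 1 := by
  have hw3 := hw
  have hform : ∀ i j : Fin w,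
      ((mtB w a) ^ s * mtC w * (mtB w a) ^ t) i j
        = ((mtB w a) ^ s) i ⟨0, by omega⟩ * (if (j : ℕ) = t + 1 then 1 else 0) := by
    intro i j
    rw [Matrix.mul_assoc, Matrix.mul_apply]
    rw [Finset.sum_eq_single (⟨0, by omega⟩ : Fin w)]
    · congr 1
      rw [Matrix.mul_apply]
      rw [Finset.sum_eq_single (⟨1, by omega⟩ : Fin w)]
      · rw [mtB_pow_row1 w hw a t ht j]
        simp [mtC]
      · intro b _ hb
        have : (b : ℕ) ≠ 1 := fun h => hb (Fin.ext h)
        simp [mtC, this]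
      · intro h; exact absurd (Finset.mem_univ _) h
    · intro b _ hb
      have : (b : ℕ) ≠ 0 := fun h => hb (Fin.ext h)
      rw [Matrix.mul_apply]
      rw [Finset.sum_eq_zero, mul_zero]
      intro c _
      simp [mtC, this]
    · intro h; exact absurd (Finset.mem_univ _) h
  obtain ⟨hc0, hc1⟩ := mtB_pow_col0 w hw a ha s hs1 (by omega)
  refine ⟨?_, ?_, ?_⟩
  · intro i j hj
    rw [hform]
    simp [hj]
  · intro i hi
    rw [hform]
    simp [hc0 i hi]
  · rw [hform]
    simp [hc1]
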